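/- Let s ≥ 0 and k ≥ 4, and let (G,u,v) be an instance of P_k-Suitability where G is (sP_1+P_4)-free. Then (G,u,v) has a solution if and only if it has an α-constant solution, where α = (s+2)(2s+4). -/

import Mathlib

open SimpleGraph

/-- `f` is an `H`-witness structure of `G`: every bag `f x` is nonempty and induces a connected
subgraph of `G`, the bags partition the vertex set of `G`, and for distinct `x`, `y` there is
an edge of `G` between the bags `f x` and `f y` if and only if `x` and `y` are adjacent in `H`. -/
def IsWitnessStructure {V W : Type} (G : SimpleGraph V) (H : SimpleGraph W)
    (f : W → Set V) : Prop :=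
  (∀ x, (f x).Nonempty) ∧
  (∀ x, (G.induce (f x)).Connected) ∧
  (∀ v : V, ∃! x, v ∈ f x) ∧
  (∀ x y, x ≠ y → ((∃ a ∈ f x, ∃ b ∈ f y, G.Adj a b) ↔ H.Adj x y))

/-- `G` contains `H` as a contraction: `G` has an `H`-witness structure. -/
def ContainsAsContraction {V W : Type} (G : SimpleGraph V) (H : SimpleGraph W) : Prop :=
  ∃ f : W → Set V, IsWitnessStructure G H f

/-- `(u, v)` is a `P_k`-suitable pair of `G`: `G` has a `P_k`-witness structure whose bag
at the first vertex of the path is `{u}` and whose bag at the last vertex is `{v}`. -/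
def PkSuitable {V : Type} (k : ℕ) (G : SimpleGraph V) (u v : V) : Prop :=
  ∃ f : Fin k → Set V, IsWitnessStructure G (pathGraph k) f ∧
    (∀ i : Fin k, (i : ℕ) = 0 → f i = {u}) ∧
    (∀ i : Fin k, (i : ℕ) = k - 1 → f i = {v})

/-- The set `T = V(G) ∖ (N[u] ∪ N[v])` of vertices outside the closed neighbourhoods
of `u` and `v`. -/
def Tset {V : Type} (G : SimpleGraph V) (u v : V) : Set V :=
  (insert u (G.neighborSet u) ∪ insert v (G.neighborSet v))ᶜ

/-- A solution for the instance `(G, u, v)` of `P_k`-Suitability, with the witness bags `f`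
and distinguished sets `Su`, `Sv`: a `P_k`-witness structure of `G` with
`W(p_1) = {u}`, `W(p_2) = N(u) ∪ Su`, `W(p_{k-1}) = N(v) ∪ Sv` and `W(p_k) = {v}`,
where `Su` and `Sv` are disjoint subsets of `T = V(G) ∖ (N[u] ∪ N[v])`. -/
def IsSolutionWith {V : Type} (k : ℕ) (G : SimpleGraph V) (u v : V)
    (f : Fin k → Set V) (Su Sv : Set V) : Prop :=
  IsWitnessStructure G (pathGraph k) f ∧
  Su ⊆ Tset G u v ∧ Sv ⊆ Tset G u v ∧ Disjoint Su Sv ∧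
  (∀ i : Fin k, (i : ℕ) = 0 → f i = {u}) ∧
  (∀ i : Fin k, (i : ℕ) = 1 → f i = G.neighborSet u ∪ Su) ∧
  (∀ i : Fin k, (i : ℕ) = k - 2 → f i = G.neighborSet v ∪ Sv) ∧
  (∀ i : Fin k, (i : ℕ) = k - 1 → f i = {v})

/-- A solution `(f, Su, Sv)` is `α`-constant if `Su` contains a subset `S'` of size at most `α`
with `N(u) ∪ S'` inducing a connected subgraph of `G`, or `Sv` contains a subset `S'` of size
at most `α` with `N(v) ∪ S'` inducing a connected subgraph of `G`. -/
def IsAlphaConstant {V : Type} (G : SimpleGraph V) (u v : V) (Su Sv : Set V) (α : ℕ) : Prop :=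
  (∃ S' ⊆ Su, S'.ncard ≤ α ∧ (G.induce (G.neighborSet u ∪ S')).Connected) ∨
  (∃ S' ⊆ Sv, S'.ncard ≤ α ∧ (G.induce (G.neighborSet v ∪ S')).Connected)

lemma exists_take {V : Type} {G : SimpleGraph V} {x y : V} (p : G.Walk x y) (i : ℕ) (hi : i ≤ p.length) :
    ∃ q : G.Walk x (p.getVert i), q.length = i := by
  induction p generalizing i with
  | nil =>
    simp only [Walk.length_nil, Nat.le_zero] at hi
    subst hi
    exact ⟨Walk.nil, rfl⟩
  | cons h p ih =>
    cases i with
    | zero => exact ⟨Walk.nil.copy rfl (p.cons h).getVert_zero.symm, by simp⟩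
    | succ i =>
      obtain ⟨q, hq⟩ := ih i (by simpa using hi)
      exact ⟨(q.cons h).copy rfl (by rw [Walk.getVert_cons_succ]), by simp [hq]⟩

lemma exists_drop {V : Type} {G : SimpleGraph V} {x y : V} (p : G.Walk x y) (i : ℕ) :
    ∃ q : G.Walk (p.getVert i) y, q.length = p.length - i := by
  induction p generalizing i with
  | nil => exact ⟨Walk.nil.copy (by cases i <;> rfl) rfl, by simp⟩
  | cons h p ih =>
    cases i with
    | zero => exact ⟨(p.cons h).copy (p.cons h).getVert_zero.symm rfl, by simp⟩
    | succ i =>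
      obtain ⟨q, hq⟩ := ih i
      exact ⟨q.copy (by rw [Walk.getVert_cons_succ]) rfl, by simp [hq]⟩

lemma shortest_ne {V : Type} {G : SimpleGraph V} {x y : V} (p : G.Walk x y) (hp : p.length = G.dist x y)
    {i j : ℕ} (hij : i < j) (hj : j ≤ p.length) : p.getVert i ≠ p.getVert j := by
  intro heq
  obtain ⟨q, hq⟩ := exists_take p i (le_trans hij.le hj)
  obtain ⟨r, hr⟩ := exists_drop p j
  have := G.dist_le (q.append (r.copy heq.symm rfl))
  rw [Walk.length_append, hq, Walk.length_copy, hr, ← hp] at this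
  omega

lemma shortest_adj {V : Type} {G : SimpleGraph V} {x y : V} (p : G.Walk x y) (hp : p.length = G.dist x y)
    {i j : ℕ} (hij : i < j) (hj : j ≤ p.length)
    (hadj : G.Adj (p.getVert i) (p.getVert j)) : j = i + 1 := by
  by_contra hne
  obtain ⟨q, hq⟩ := exists_take p i (le_trans hij.le hj)
  obtain ⟨r, hr⟩ := exists_drop p j
  have := G.dist_le (q.append (Walk.cons hadj r))
  rw [Walk.length_append, hq, Walk.length_cons, hr, ← hp] at this
  omega

lemma embed_free {U : Type} {s : ℕ} (H : SimpleGraph U)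
    (hfree : IsEmpty (((⊥ : SimpleGraph (Fin s)) ⊕g pathGraph 4) ↪g H))
    {a b c d : U} (g : Fin s → U) (hginj : Function.Injective g)
    (hab : H.Adj a b) (hbc : H.Adj b c) (hcd : H.Adj c d)
    (hac : ¬H.Adj a c) (had : ¬H.Adj a d) (hbd : ¬H.Adj b d)
    (hgadj : ∀ i j, i ≠ j → ¬H.Adj (g i) (g j))
    (hga : ∀ i, ¬H.Adj (g i) a ∧ ¬H.Adj (g i) b ∧ ¬H.Adj (g i) c ∧ ¬H.Adj (g i) d)
    (hgne : ∀ i, g i ≠ a ∧ g i ≠ b ∧ g i ≠ c ∧ g i ≠ d) : False := by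
  have hanec : a ≠ c := fun h => had (h ▸ hcd)
  have haned : a ≠ d := fun h => hac (h ▸ hcd.symm)
  have hbned : b ≠ d := fun h => had (h ▸ hab)
  have hca : ¬H.Adj c a := fun h => hac h.symm
  have hda : ¬H.Adj d a := fun h => had h.symm
  have hdb : ¬H.Adj d b := fun h => hbd h.symm
  set f4 : Fin 4 → U := fun j => if j = 0 then a else if j = 1 then b else if j = 2 then c else d with hf4
  have f4inj : Function.Injective f4 := by
    intro i j h
    fin_cases i <;> fin_cases j <;>
      first
        | rfl
        | exact absurd h hab.ne | exact absurd h hbc.ne | exact absurd h hcd.ne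
        | exact absurd h hanec | exact absurd h haned | exact absurd h hbned
        | exact absurd h.symm hab.ne | exact absurd h.symm hbc.ne | exact absurd h.symm hcd.ne
        | exact absurd h.symm hanec | exact absurd h.symm haned | exact absurd h.symm hbned
  have hcross : ∀ i j, ¬H.Adj (g i) (f4 j) := by
    intro i j
    obtain ⟨h1, h2, h3, h4⟩ := hga i
    fin_cases j <;> assumption
  have hcrossne : ∀ i j, g i ≠ f4 j := by
    intro i j
    obtain ⟨h1, h2, h3, h4⟩ := hgne i
    fin_cases j <;> assumption
  refine hfree.false ⟨⟨Sum.elim g f4, ?_⟩, ?_⟩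
  · rintro (i | i) (j | j) h
    · exact congrArg Sum.inl (hginj h)
    · exact absurd h (hcrossne i j)
    · exact absurd h.symm (hcrossne j i)
    · exact congrArg Sum.inr (f4inj h)
  · rintro (i | i) (j | j)
    · constructor
      · intro h
        exact absurd h (hgadj i j (fun hij => H.irrefl (hij ▸ h)))
      · intro h
        exact absurd h (by simp [SimpleGraph.sum])
    · constructor
      · intro h; exact absurd h (hcross i j)
      · intro h; exact absurd h (by simp [SimpleGraph.sum])
    · constructor
      · intro h; exact absurd h.symm (hcross j i)
      · intro h; exact absurd h (by simp [SimpleGraph.sum])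
    · show H.Adj (f4 i) (f4 j) ↔ (pathGraph 4).Adj i j
      fin_cases i <;> fin_cases j <;>
        first
          | exact iff_of_false (H.irrefl) (by rw [pathGraph_adj]; decide)
          | exact iff_of_true hab (by rw [pathGraph_adj]; decide)
          | exact iff_of_true hab.symm (by rw [pathGraph_adj]; decide)
          | exact iff_of_true hbc (by rw [pathGraph_adj]; decide)
          | exact iff_of_true hbc.symm (by rw [pathGraph_adj]; decide)
          | exact iff_of_true hcd (by rw [pathGraph_adj]; decide)
          | exact iff_of_true hcd.symm (by rw [pathGraph_adj]; decide)
          | exact iff_of_false hac (by rw [pathGraph_adj]; decide)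
          | exact iff_of_false hca (by rw [pathGraph_adj]; decide)
          | exact iff_of_false had (by rw [pathGraph_adj]; decide)
          | exact iff_of_false hda (by rw [pathGraph_adj]; decide)
          | exact iff_of_false hbd (by rw [pathGraph_adj]; decide)
          | exact iff_of_false hdb (by rw [pathGraph_adj]; decide)

lemma dist_le_of_free {V : Type} {G : SimpleGraph V} {s : ℕ}
    (hfree : IsEmpty (((⊥ : SimpleGraph (Fin s)) ⊕g pathGraph 4) ↪g G))
    {x y : V} (hr : G.Reachable x y) : G.dist x y ≤ 2 * s + 2 := by
  by_contra hgt
  push_neg at hgt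
  obtain ⟨p, hp⟩ := hr.exists_walk_length_eq_dist
  have hL : 2 * s + 3 ≤ p.length := by omega
  have hne : ∀ {i j : ℕ}, i < j → j ≤ p.length → p.getVert i ≠ p.getVert j :=
    fun hij hj => shortest_ne p hp hij hj
  have hadj : ∀ {i j : ℕ}, i < j → j ≤ p.length → G.Adj (p.getVert i) (p.getVert j) → j = i + 1 :=
    fun hij hj h => shortest_adj p hp hij hj h
  have hnadj : ∀ {i j : ℕ}, i < j → j ≤ p.length → j ≠ i + 1 → ¬G.Adj (p.getVert i) (p.getVert j) :=
    fun hij hj hne2 h => hne2 (hadj hij hj h)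
  set g : Fin s → V := fun i => p.getVert (5 + 2 * i.val) with hg
  have hgb : ∀ i : Fin s, 5 + 2 * i.val ≤ p.length := by
    intro i; have := i.isLt; omega
  refine embed_free G hfree (a := p.getVert 0) (b := p.getVert 1) (c := p.getVert 2)
    (d := p.getVert 3) g ?_ ?_ ?_ ?_ ?_ ?_ ?_ ?_ ?_ ?_
  · intro i j hij
    rcases Nat.lt_or_ge (5 + 2 * i.val) (5 + 2 * j.val) with h | h
    · exact absurd hij (fun hq => absurd hq (by
        exact fun hq' => (hne h (hgb j)) (congrArg (fun t => t) hq')))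
    · rcases Nat.lt_or_ge (5 + 2 * j.val) (5 + 2 * i.val) with h2 | h2
      · exact absurd hij.symm (fun hq => (hne h2 (hgb i)) hq)
      · exact Fin.ext (by omega)
  · exact p.adj_getVert_succ (by omega)
  · have := p.adj_getVert_succ (i := 1) (by omega); simpa using this
  · have := p.adj_getVert_succ (i := 2) (by omega); simpa using this
  · exact hnadj (by omega) (by omega) (by omega)
  · exact hnadj (by omega) (by omega) (by omega)
  · exact hnadj (by omega) (by omega) (by omega)
  · intro i j hij
    rcases Nat.lt_or_ge (5 + 2 * i.val) (5 + 2 * j.val) with h | h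
    · exact hnadj h (hgb j) (by omega)
    · have h2 : 5 + 2 * j.val < 5 + 2 * i.val := by
        rcases Nat.lt_or_ge (5 + 2 * j.val) (5 + 2 * i.val) with h2 | h2
        · exact h2
        · exact absurd (Fin.ext (show i.val = j.val by omega)) hij
      exact fun hA => hnadj h2 (hgb i) (by omega) hA.symm
  · intro i
    refine ⟨?_, ?_, ?_, ?_⟩ <;>
      exact fun hA => hnadj (by omega) (hgb i) (by omega) hA.symm
  · intro i
    refine ⟨?_, ?_, ?_, ?_⟩ <;>
      exact fun hA => hne (by omega) (hgb i) hA.symm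

lemma induce_singleton_connected {V : Type} (G : SimpleGraph V) (a : V) :
    (G.induce {a}).Connected := by
  haveI : Nonempty ({a} : Set V) := ⟨⟨a, rfl⟩⟩
  refine ⟨fun u v => ?_⟩
  have hu : (u : V) = a := u.2
  have hv : (v : V) = a := v.2
  have : u = v := Subtype.ext (hu.trans hv.symm)
  exact this ▸ Reachable.refl u

lemma ncard_biUnion_le {V : Type} [Fintype V] (F : Finset V) (f : V → Set V) (m : ℕ)
    (h : ∀ x ∈ F, (f x).ncard ≤ m) : (⋃ x ∈ (↑F : Set V), f x).ncard ≤ F.card * m := by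
  classical
  induction F using Finset.induction_on with
  | empty => simp
  | @insert a F' hx ih =>
    have heq : (⋃ x ∈ (↑(insert a F') : Set V), f x) = f a ∪ ⋃ x ∈ (↑F' : Set V), f x := by
      simp [Set.biUnion_insert]
    rw [heq]
    calc (f a ∪ ⋃ x ∈ (↑F' : Set V), f x).ncard
        ≤ (f a).ncard + (⋃ x ∈ (↑F' : Set V), f x).ncard := Set.ncard_union_le _ _
      _ ≤ m + F'.card * m := by
          gcongr
          · exact h a (Finset.mem_insert_self a F')
          · exact ih (fun x hx => h x (Finset.mem_insert_of_mem hx))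
      _ = (insert a F').card * m := by rw [Finset.card_insert_of_notMem hx]; ring

/-- In a connected induced subgraph `W` of a `P4`-free environment,
a non-neighbour `z` of `a` has a common neighbour with `a` inside `W`. -/
lemma exists_common_neighbor {V : Type} {G : SimpleGraph V} {W : Set V} (hconn : (G.induce W).Connected)
    (hNoP4 : ¬ ∃ a ∈ W, ∃ b ∈ W, ∃ c ∈ W, ∃ d ∈ W, G.Adj a b ∧ G.Adj b c ∧ G.Adj c d ∧
      ¬G.Adj a c ∧ ¬G.Adj a d ∧ ¬G.Adj b d)
    {a z : V} (ha : a ∈ W) (hz : z ∈ W) (hne : z ≠ a) (hnadj : ¬G.Adj a z) :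
    ∃ b ∈ W, G.Adj a b ∧ G.Adj b z := by
  set H := G.induce W with hH
  set a' : W := ⟨a, ha⟩
  set z' : W := ⟨z, hz⟩
  have hr : H.Reachable z' a' := hconn.preconnected z' a'
  have hd1 : 0 < H.dist z' a' := hr.pos_dist_of_ne (by simp [z', a', Subtype.ext_iff, hne])
  have hd2 : H.dist z' a' ≠ 1 := by
    intro h1
    have h2 : H.Adj z' a' := dist_eq_one_iff_adj.mp h1
    have h3 : G.Adj z a := h2
    exact hnadj h3.symm
  obtain ⟨p, hp⟩ := hr.exists_walk_length_eq_dist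
  have hlen2 : 2 ≤ p.length := by omega
  by_cases h3 : 3 ≤ p.length
  · exfalso
    apply hNoP4
    refine ⟨↑(p.getVert 0), (p.getVert 0).2, ↑(p.getVert 1), (p.getVert 1).2,
      ↑(p.getVert 2), (p.getVert 2).2, ↑(p.getVert 3), (p.getVert 3).2, ?_, ?_, ?_, ?_, ?_, ?_⟩
    · exact p.adj_getVert_succ (by omega)
    · have := p.adj_getVert_succ (i := 1) (by omega); exact this
    · have := p.adj_getVert_succ (i := 2) (by omega); exact this
    · intro h
      have : (2 : ℕ) = 0 + 1 := shortest_adj p hp (by omega) (by omega) (h : H.Adj _ _)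
      omega
    · intro h
      have : (3 : ℕ) = 0 + 1 := shortest_adj p hp (by omega) (by omega) (h : H.Adj _ _)
      omega
    · intro h
      have : (3 : ℕ) = 1 + 1 := shortest_adj p hp (by omega) (by omega) (h : H.Adj _ _)
      omega
  · have hlen : p.length = 2 := by omega
    have hzb : H.Adj z' (p.getVert 1) := by
      have := p.adj_getVert_succ (i := 0) (by omega)
      rwa [p.getVert_zero] at this
    have hba : H.Adj (p.getVert 1) a' := by
      have := p.adj_getVert_succ (i := 1) (by omega)
      have h2 : p.getVert 2 = a' := by rw [← hlen]; exact p.getVert_length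
      rwa [h2] at this
    refine ⟨↑(p.getVert 1), (p.getVert 1).2, ?_, ?_⟩
    · exact (hba : G.Adj _ _).symm
    · exact (hzb : G.Adj _ _).symm

set_option maxHeartbeats 1000000 in
lemma exists_cds {V : Type} [Fintype V] (G : SimpleGraph V) (s : ℕ)
    (hfree : IsEmpty (((⊥ : SimpleGraph (Fin s)) ⊕g pathGraph 4) ↪g G))
    (W : Set V) (hWne : W.Nonempty) (hconn : (G.induce W).Connected) :
    ∃ D : Set V, D ⊆ W ∧ D.Nonempty ∧ (G.induce D).Connected ∧
      (∀ w ∈ W, w ∈ D ∨ ∃ x ∈ D, G.Adj x w) ∧ D.ncard ≤ (s + 2) * (2 * s + 4) := by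
  classical
  have halpha2 : 2 ≤ (s + 2) * (2 * s + 4) := by nlinarith
  by_cases hP4 : ∃ a ∈ W, ∃ b ∈ W, ∃ c ∈ W, ∃ d ∈ W, G.Adj a b ∧ G.Adj b c ∧ G.Adj c d ∧
      ¬G.Adj a c ∧ ¬G.Adj a d ∧ ¬G.Adj b d
  case neg =>
    obtain ⟨a, ha⟩ := hWne
    set Z : Set V := {z | z ∈ W ∧ z ≠ a ∧ ¬G.Adj a z} with hZdef
    by_cases hZ : Z.Nonempty
    · set n : V → Set V := fun z => {b | b ∈ W ∧ G.Adj a b ∧ G.Adj b z} with hndef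
      have hcomp : ∀ z1 ∈ Z, ∀ z2 ∈ Z, n z1 ⊆ n z2 ∨ n z2 ⊆ n z1 := by
        intro z1 hz1 z2 hz2
        obtain ⟨hz1W, hz1ne, hz1nadj⟩ := hz1
        obtain ⟨hz2W, hz2ne, hz2nadj⟩ := hz2
        by_contra hcon
        push_neg at hcon
        obtain ⟨hns1, hns2⟩ := hcon
        obtain ⟨b1, hb1, hb1n⟩ := Set.not_subset.mp hns1
        obtain ⟨b2, hb2, hb2n⟩ := Set.not_subset.mp hns2
        obtain ⟨hb1W, hab1, hb1z1⟩ := hb1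
        obtain ⟨hb2W, hab2, hb2z2⟩ := hb2
        have hnb1z2 : ¬G.Adj b1 z2 := fun h => hb1n ⟨hb1W, hab1, h⟩
        have hnb2z1 : ¬G.Adj b2 z1 := fun h => hb2n ⟨hb2W, hab2, h⟩
        by_cases hzz : G.Adj z1 z2
        · exact hP4 ⟨z1, hz1W, z2, hz2W, b2, hb2W, a, ha, hzz, hb2z2.symm, hab2.symm,
            fun h => hnb2z1 h.symm, fun h => hz1nadj h.symm, fun h => hz2nadj h.symm⟩
        · by_cases hbb : G.Adj b1 b2
          · exact hP4 ⟨z1, hz1W, b1, hb1W, b2, hb2W, z2, hz2W, hb1z1.symm, hbb, hb2z2,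
              fun h => hnb2z1 h.symm, hzz, hnb1z2⟩
          · exact hP4 ⟨z1, hz1W, b1, hb1W, a, ha, b2, hb2W, hb1z1.symm, hab1.symm, hab2,
              fun h => hz1nadj h.symm, fun h => hnb2z1 h.symm, hbb⟩
      obtain ⟨z0, hz0Z, hmin⟩ := Set.exists_min_image Z (fun z => (n z).ncard) (Set.toFinite Z) hZ
      obtain ⟨b, hbW, hab, hbz0⟩ := exists_common_neighbor hconn hP4 ha hz0Z.1 hz0Z.2.1 hz0Z.2.2
      have hbn : b ∈ n z0 := ⟨hbW, hab, hbz0⟩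
      have hdomZ : ∀ z ∈ Z, G.Adj b z := by
        intro z hzZ
        rcases hcomp z0 hz0Z z hzZ with h | h
        · exact (h hbn).2.2
        · have heq : n z = n z0 := Set.eq_of_subset_of_ncard_le h (hmin z hzZ)
          have hbz : b ∈ n z := heq ▸ hbn
          exact hbz.2.2
      refine ⟨{a, b}, ?_, ⟨a, by simp⟩, induce_pair_connected_of_adj hab, ?_, ?_⟩
      · simp [Set.insert_subset_iff, ha, hbW]
      · intro w hw
        by_cases hwa : w = a
        · left; simp [hwa]
        · by_cases hwadj : G.Adj a w
          · right; exact ⟨a, by simp, hwadj⟩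
          · right; exact ⟨b, by simp, hdomZ w ⟨hw, hwa, hwadj⟩⟩
      · have h2 : ({a, b} : Set V).ncard ≤ 2 := by
          have := Set.ncard_insert_le a ({b} : Set V)
          simpa [Set.ncard_singleton] using this
        exact h2.trans halpha2
    · refine ⟨{a}, by simp [ha], ⟨a, rfl⟩, induce_singleton_connected G a, ?_, ?_⟩
      · intro w hw
        by_cases hwa : w = a
        · left; simp [hwa]
        · right
          refine ⟨a, rfl, ?_⟩
          by_contra hnadj
          exact hZ ⟨w, hw, hwa, hnadj⟩
      · rw [Set.ncard_singleton]; omega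
  case pos =>
    obtain ⟨a, haW, b, hbW, c, hcW, d, hdW, hab, hbc, hcd, hnac, hnad, hnbd⟩ := hP4
    have hfreeW : IsEmpty (((⊥ : SimpleGraph (Fin s)) ⊕g pathGraph 4) ↪g G.induce W) :=
      ⟨fun e => hfree.false ((SimpleGraph.Embedding.induce W).comp e)⟩
    set X : Set V := {x | x ∈ W ∧ ¬G.Adj x a ∧ ¬G.Adj x b ∧ ¬G.Adj x c ∧ ¬G.Adj x d ∧
      x ≠ a ∧ x ≠ b ∧ x ≠ c ∧ x ≠ d} with hXdef
    have hindep : ∀ (J : Finset V), ↑J ⊆ X →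
        (∀ p ∈ J, ∀ q ∈ J, p ≠ q → ¬G.Adj p q) → J.card < s := by
      intro J hJX hJind
      by_contra hle
      push_neg at hle
      obtain ⟨t, htJ, htcard⟩ := Finset.exists_subset_card_eq hle
      have e : Fin s ≃ {x // x ∈ t} := (t.equivFin.trans (finCongr htcard)).symm
      set g : Fin s → V := fun i => ↑(e i) with hgdef
      have hginj : Function.Injective g := fun i j h => e.injective (Subtype.ext h)
      have hgX : ∀ i, g i ∈ X := fun i => hJX (htJ (e i).2)
      refine embed_free G hfree g hginj hab hbc hcd hnac hnad hnbd ?_ ?_ ?_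
      · intro i j hij
        exact hJind _ (htJ (e i).2) _ (htJ (e j).2) (fun h => hij (hginj h))
      · intro i; obtain ⟨_, h1, h2, h3, h4, _⟩ := hgX i; exact ⟨h1, h2, h3, h4⟩
      · intro i; obtain ⟨_, _, _, _, _, h5, h6, h7, h8⟩ := hgX i; exact ⟨h5, h6, h7, h8⟩
    set P : Finset V → Prop := fun J => ↑J ⊆ X ∧ ∀ p ∈ J, ∀ q ∈ J, p ≠ q → ¬G.Adj p q with hPdef
    set cands : Finset (Finset V) := Finset.univ.filter P with hcands
    have hcne : cands.Nonempty := ⟨∅, by simp [hcands, Finset.mem_filter, hPdef]⟩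
    obtain ⟨F, hFmem, hFmax⟩ := Finset.exists_max_image cands (fun J => J.card) hcne
    have hFP : P F := (Finset.mem_filter.mp hFmem).2
    have hFdom : ∀ x ∈ X, x ∉ F → ∃ i ∈ F, G.Adj i x := by
      intro x hxX hxF
      by_contra hno
      push_neg at hno
      have hins : insert x F ∈ cands := by
        rw [hcands, Finset.mem_filter]
        refine ⟨Finset.mem_univ _, ?_, ?_⟩
        · simp only [Finset.coe_insert, Set.insert_subset_iff]
          exact ⟨hxX, hFP.1⟩
        · intro p hp q hq hpq
          rcases Finset.mem_insert.mp hp with rfl | hp'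
          · rcases Finset.mem_insert.mp hq with rfl | hq'
            · exact absurd rfl hpq
            · exact fun h => hno q hq' h.symm
          · rcases Finset.mem_insert.mp hq with rfl | hq'
            · exact hno p hp'
            · exact hFP.2 p hp' q hq' hpq
      have := hFmax _ hins
      rw [Finset.card_insert_of_notMem hxF] at this
      omega
    have hFcard : F.card < s := hindep F hFP.1 hFP.2
    have hwalk : ∀ x : V, ∃ Q : Set V, x ∈ W →
        (x ∈ Q ∧ a ∈ Q ∧ Q ⊆ W ∧ (G.induce Q).Connected ∧ Q.ncard ≤ 2 * s + 3) := by
      intro x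
      by_cases hx : x ∈ W
      · have hr : (G.induce W).Reachable ⟨x, hx⟩ ⟨a, haW⟩ := hconn.preconnected _ _
        obtain ⟨p, hp⟩ := hr.exists_walk_length_eq_dist
        have hdist := dist_le_of_free hfreeW hr
        have hplen : p.length ≤ 2 * s + 2 := by omega
        set pg : G.Walk x a := (p.map (SimpleGraph.Embedding.induce W).toHom).copy rfl rfl
          with hpgdef
        refine ⟨{v | v ∈ pg.support}, fun _ => ⟨pg.start_mem_support, pg.end_mem_support,
          ?_, Walk.connected_induce_support pg, ?_⟩⟩
        · intro v hv
          simp only [Set.mem_setOf_eq, hpgdef, Walk.support_copy, Walk.support_map] at hv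
          change v ∈ (p.map (SimpleGraph.Embedding.induce W).toHom).support at hv
          rw [Walk.support_map] at hv
          obtain ⟨w, hw, rfl⟩ := List.mem_map.mp hv
          exact w.2
        · have heq : {v | v ∈ pg.support} = ↑pg.support.toFinset := by
            ext v; simp
          rw [heq, Set.ncard_coe_finset]
          have h1 : pg.support.toFinset.card ≤ pg.support.length := pg.support.toFinset_card_le
          have h2 : pg.support.length = pg.length + 1 := Walk.length_support pg
          have h3 : pg.length = p.length := by
            rw [hpgdef]
            change (p.map (SimpleGraph.Embedding.induce W).toHom).length = p.length
            rw [Walk.length_map]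
          omega
      · exact ⟨∅, fun h => absurd h hx⟩
    choose Q hQ using hwalk
    have hFX : ∀ x ∈ F, x ∈ X := fun x hx => hFP.1 hx
    have hQprops : ∀ x ∈ F, x ∈ Q x ∧ a ∈ Q x ∧ Q x ⊆ W ∧ (G.induce (Q x)).Connected ∧
        (Q x).ncard ≤ 2 * s + 3 := fun x hx => hQ x (hFX x hx).1
    set w4 : G.Walk a d := Walk.cons hab (Walk.cons hbc (Walk.cons hcd Walk.nil)) with hw4
    set Kset : Set V := {v | v ∈ w4.support} with hKdef
    have hKa : a ∈ Kset := w4.start_mem_support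
    have hKb : b ∈ Kset := by simp [hKdef, hw4]
    have hKc : c ∈ Kset := by simp [hKdef, hw4]
    have hKd : d ∈ Kset := by simp [hKdef, hw4]
    have hKsub : Kset ⊆ W := by
      intro v hv
      simp only [hKdef, hw4, Set.mem_setOf_eq, Walk.support_cons, Walk.support_nil,
        List.mem_cons, List.not_mem_nil, or_false] at hv
      rcases hv with rfl | rfl | rfl | rfl <;> assumption
    have hKconn := Walk.connected_induce_support w4
    have hKcard : Kset.ncard ≤ 4 := by
      have heq : Kset = ↑w4.support.toFinset := by ext v; simp [hKdef]
      rw [heq, Set.ncard_coe_finset]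
      have h1 : w4.support.toFinset.card ≤ w4.support.length := w4.support.toFinset_card_le
      have h2 : w4.support.length = w4.length + 1 := Walk.length_support w4
      have h3 : w4.length = 3 := by simp [hw4]
      omega
    refine ⟨Kset ∪ ⋃ x ∈ (↑F : Set V), Q x, ?_, ⟨a, Or.inl hKa⟩, ?_, ?_, ?_⟩
    · apply Set.union_subset hKsub
      apply Set.iUnion₂_subset
      intro x hx
      exact (hQprops x hx).2.2.1
    · have hDeq : Kset ∪ ⋃ x ∈ (↑F : Set V), Q x
          = ⋃₀ (insert Kset ((fun x => Q x) '' ↑F)) := by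
        rw [Set.sUnion_insert, Set.sUnion_image]
      rw [hDeq]
      have haS : ∀ u ∈ insert Kset ((fun x => Q x) '' (↑F : Set V)), a ∈ u := by
        intro u hu
        rcases Set.mem_insert_iff.mp hu with rfl | ⟨x, hxF, rfl⟩
        · exact hKa
        · exact (hQprops x hxF).2.1
      apply induce_sUnion_connected_of_pairwise_not_disjoint
      · exact ⟨Kset, Set.mem_insert _ _⟩
      · intro s' t' hs' ht'
        exact ⟨a, haS _ hs', haS _ ht'⟩
      · intro s' hs'
        rcases Set.mem_insert_iff.mp hs' with rfl | ⟨x, hxF, rfl⟩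
        · exact hKconn
        · exact (hQprops x hxF).2.2.2.1
    · intro w hw
      by_cases hwX : w ∈ X
      · by_cases hwF : w ∈ F
        · left
          exact Set.mem_union_right _ (Set.mem_biUnion hwF (hQprops w hwF).1)
        · obtain ⟨i, hiF, hadj⟩ := hFdom w hwX hwF
          right
          exact ⟨i, Set.mem_union_right _ (Set.mem_biUnion hiF (hQprops i hiF).1), hadj⟩
      · have hcases : G.Adj w a ∨ G.Adj w b ∨ G.Adj w c ∨ G.Adj w d ∨
            w = a ∨ w = b ∨ w = c ∨ w = d := by
          by_contra hcon
          push_neg at hcon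
          exact hwX ⟨hw, hcon.1, hcon.2.1, hcon.2.2.1, hcon.2.2.2.1, hcon.2.2.2.2.1,
            hcon.2.2.2.2.2.1, hcon.2.2.2.2.2.2.1, hcon.2.2.2.2.2.2.2⟩
        rcases hcases with h | h | h | h | rfl | rfl | rfl | rfl
        · exact Or.inr ⟨a, Or.inl hKa, h.symm⟩
        · exact Or.inr ⟨b, Or.inl hKb, h.symm⟩
        · exact Or.inr ⟨c, Or.inl hKc, h.symm⟩
        · exact Or.inr ⟨d, Or.inl hKd, h.symm⟩
        · exact Or.inl (Or.inl hKa)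
        · exact Or.inl (Or.inl hKb)
        · exact Or.inl (Or.inl hKc)
        · exact Or.inl (Or.inl hKd)
    · calc (Kset ∪ ⋃ x ∈ (↑F : Set V), Q x).ncard
          ≤ Kset.ncard + (⋃ x ∈ (↑F : Set V), Q x).ncard := Set.ncard_union_le _ _
        _ ≤ 4 + F.card * (2 * s + 3) := add_le_add hKcard
            (ncard_biUnion_le F Q (2 * s + 3) (fun x hx => (hQprops x hx).2.2.2.2))
        _ ≤ (s + 2) * (2 * s + 4) := by nlinarith [hFcard]

lemma exists_connector {V : Type} [Fintype V] (G : SimpleGraph V) (s : ℕ)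
    (hfree : IsEmpty (((⊥ : SimpleGraph (Fin s)) ⊕g pathGraph 4) ↪g G))
    (A B : Set V) (hA : A.Nonempty) (hconn : (G.induce (A ∪ B)).Connected) :
    ∃ S' ⊆ B, S'.ncard ≤ (s + 2) * (2 * s + 4) ∧ (G.induce (A ∪ S')).Connected := by
  obtain ⟨D, hDW, hDne, hDconn, hDdom, hDcard⟩ :=
    exists_cds G s hfree (A ∪ B) (hA.mono Set.subset_union_left) hconn
  refine ⟨D ∩ B, Set.inter_subset_right, ?_, ?_⟩
  · exact le_trans (Set.ncard_le_ncard Set.inter_subset_left D.toFinite) hDcard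
  · have hAeq : A ∪ D ∩ B = A ∪ D := by
      apply Set.Subset.antisymm
      · exact Set.union_subset_union_right A Set.inter_subset_left
      · rintro x (hx | hx)
        · exact Or.inl hx
        · rcases hDW hx with hA' | hB'
          · exact Or.inl hA'
          · exact Or.inr ⟨hx, hB'⟩
    rw [hAeq]
    obtain ⟨u0, hu0⟩ := hDne
    apply G.induce_connected_of_patches u0 (Or.inr hu0)
    intro v hv
    by_cases hvD : v ∈ D
    · exact ⟨D, Set.subset_union_right, hu0, hvD, hDconn.preconnected _ _⟩
    · have hvA : v ∈ A := by
        rcases hv with h | h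
        · exact h
        · exact absurd h hvD
      obtain ⟨x, hxD, hxadj⟩ := (hDdom v (Or.inl hvA)).resolve_left hvD
      refine ⟨D ∪ {v}, ?_, Or.inl hu0, Or.inr rfl, ?_⟩
      · apply Set.union_subset (Set.subset_union_right)
        exact fun y hy => Or.inl (hy ▸ hvA)
      · have hconn' : (G.induce (D ∪ {v})).Connected :=
          connected_induce_union hDconn.preconnected (induce_singleton_connected G v).preconnected hxD rfl hxadj
        exact hconn'.preconnected _ _

theorem stmt_11 {V : Type} [Fintype V] (G : SimpleGraph V) (s k : ℕ) (hk : 4 ≤ k)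
    (hfree : IsEmpty (((⊥ : SimpleGraph (Fin s)) ⊕g pathGraph 4) ↪g G)) (u v : V) :
    (∃ (f : Fin k → Set V) (Su Sv : Set V), IsSolutionWith k G u v f Su Sv) ↔
    (∃ (f : Fin k → Set V) (Su Sv : Set V), IsSolutionWith k G u v f Su Sv ∧
      IsAlphaConstant G u v Su Sv ((s + 2) * (2 * s + 4))) := by
  constructor
  · rintro ⟨f, Su, Sv, hsol⟩
    obtain ⟨hwit, hSuT, hSvT, hdisj, h0, h1, hk2, hk1⟩ := hsol
    set i0 : Fin k := ⟨0, by omega⟩ with hi0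
    set i1 : Fin k := ⟨1, by omega⟩ with hi1
    have hf1 : f i1 = G.neighborSet u ∪ Su := h1 i1 rfl
    have hconn1 : (G.induce (G.neighborSet u ∪ Su)).Connected := by
      have := hwit.2.1 i1
      rwa [hf1] at this
    have hNu : (G.neighborSet u).Nonempty := by
      have hne : i0 ≠ i1 := by simp [hi0, hi1, Fin.ext_iff]
      have hadj : (pathGraph k).Adj i0 i1 := by
        rw [pathGraph_adj]; left; rfl
      obtain ⟨x, hx, y, hy, hxy⟩ := (hwit.2.2.2 i0 i1 hne).mpr hadj
      have hx' : x = u := by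
        have := h0 i0 rfl
        rw [this] at hx
        exact hx
      exact ⟨y, by rw [← hx']; exact hxy⟩
    obtain ⟨S', hS'B, hS'card, hS'conn⟩ :=
      exists_connector G s hfree (G.neighborSet u) Su hNu hconn1
    exact ⟨f, Su, Sv, ⟨hwit, hSuT, hSvT, hdisj, h0, h1, hk2, hk1⟩,
      Or.inl ⟨S', hS'B, hS'card, hS'conn⟩⟩
  · rintro ⟨f, Su, Sv, hsol, -⟩
    exact ⟨f, Su, Sv, hsol⟩
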